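/- For every odd prime p, the subgroup commutativity degree of the dihedral group D_{2p} equals (7p³ − 5p² − 11p + 9)/(p⁴ + 4p³ − 2p² − 12p + 9). -/

import Mathlib

open scoped Pointwise

def permutizer {G : Type*} [Group G] (X : Subgroup G) : Subgroup G :=
  Subgroup.closure {g : G |
    (Subgroup.zpowers g : Set G) * (X : Set G) = (X : Set G) * (Subgroup.zpowers g : Set G)}

noncomputable def pd (G : Type*) [Group G] : ℚ :=
  (∑ᶠ X : Subgroup G, (Nat.card ↥(permutizer X) : ℚ)) /
    ((Nat.card G : ℚ) * (Nat.card (Subgroup G) : ℚ))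

noncomputable def PP (G : Type*) [Group G] : Subgroup G :=
  ⨅ H : Subgroup G, permutizer H

noncomputable def sd (G : Type*) [Group G] : ℚ :=
  (Nat.card {HK : Subgroup G × Subgroup G //
      (HK.1 : Set G) * (HK.2 : Set G) = (HK.2 : Set G) * (HK.1 : Set G)} : ℚ) /
    ((Nat.card (Subgroup G) : ℚ)) ^ 2

namespace SDAux
open DihedralGroup
set_option linter.unusedSectionVars false

variable {p : ℕ} [NeZero p]

@[simp] lemma inv_r (i : ZMod p) : (r i)⁻¹ = r (-i) := rfl
@[simp] lemma inv_sr (i : ZMod p) : (sr i)⁻¹ = sr i := rfl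

/-- The rotation subgroup. -/
def R (p : ℕ) : Subgroup (DihedralGroup p) where
  carrier := Set.range r
  mul_mem' := by rintro _ _ ⟨i, rfl⟩ ⟨j, rfl⟩; exact ⟨i + j, rfl⟩
  one_mem' := ⟨0, rfl⟩
  inv_mem' := by rintro _ ⟨i, rfl⟩; exact ⟨-i, rfl⟩

/-- The reflection subgroups. -/
def S {p : ℕ} (i : ZMod p) : Subgroup (DihedralGroup p) where
  carrier := {1, sr i}
  mul_mem' := by
    rintro a b (rfl | rfl) (rfl | rfl) <;>
      simp_all [Set.mem_insert_iff, sr_mul_self, one_def, -r_zero]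
  one_mem' := Or.inl rfl
  inv_mem' := by
    rintro a (rfl | rfl)
    · left; rw [inv_one]
    · right; rfl

lemma mem_R {x : DihedralGroup p} : x ∈ R p ↔ ∃ i, x = r i := by
  constructor
  · rintro ⟨i, rfl⟩; exact ⟨i, rfl⟩
  · rintro ⟨i, rfl⟩; exact ⟨i, rfl⟩

lemma mem_S {i : ZMod p} {x : DihedralGroup p} : x ∈ S i ↔ x = 1 ∨ x = sr i := Iff.rfl

lemma coe_S (i : ZMod p) : (S i : Set (DihedralGroup p)) = {1, sr i} := rfl

lemma R_normal : (R p).Normal := by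
  constructor
  rintro _ ⟨i, rfl⟩ g
  rcases g with j | j
  · exact ⟨i, by simp [add_comm, add_left_comm, add_sub_cancel_right]⟩
  · refine ⟨-i, ?_⟩
    simp only [sr_mul_r, inv_sr, sr_mul_sr]
    ring_nf

lemma r_pow (i : ZMod p) (k : ℕ) : (r i) ^ k = r ((k : ZMod p) * i) := by
  induction k with
  | zero => simp [one_def, -r_zero]
  | succ k ih => rw [pow_succ, ih, r_mul_r]; push_cast; ring_nf

lemma r_all [Fact p.Prime] {H : Subgroup (DihedralGroup p)} {i : ZMod p}
    (hi0 : i ≠ 0) (hi : r i ∈ H) (j : ZMod p) : r j ∈ H := by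
  have h1 : (r i) ^ (j * i⁻¹).val ∈ H := H.pow_mem hi _
  rw [r_pow, ZMod.natCast_zmod_val] at h1
  have he : j * i⁻¹ * i = j := by field_simp
  rwa [he] at h1

lemma classify [Fact p.Prime] (H : Subgroup (DihedralGroup p)) :
    H = ⊥ ∨ H = ⊤ ∨ H = R p ∨ ∃ i, H = S i := by
  by_cases hr : ∃ i, i ≠ 0 ∧ r i ∈ H
  · obtain ⟨i, hi0, hi⟩ := hr
    have hall : ∀ j, r j ∈ H := r_all hi0 hi
    by_cases hs : ∃ j, sr j ∈ H
    · obtain ⟨j, hj⟩ := hs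
      right; left
      rw [eq_top_iff]; intro x _
      rcases x with k | k
      · exact hall k
      · have hx : sr k = sr j * r (k - j) := by rw [sr_mul_r]; ring_nf
        rw [hx]; exact H.mul_mem hj (hall _)
    · right; right; left
      apply le_antisymm
      · intro x hx
        rcases x with k | k
        · exact mem_R.2 ⟨k, rfl⟩
        · exact absurd ⟨k, hx⟩ hs
      · intro x hx
        obtain ⟨k, rfl⟩ := mem_R.1 hx
        exact hall k
  · push_neg at hr
    by_cases hs : ∃ j, sr j ∈ H
    · obtain ⟨j, hj⟩ := hs
      right; right; right
      refine ⟨j, le_antisymm ?_ ?_⟩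
      · intro x hx
        rcases x with k | k
        · rcases eq_or_ne k 0 with rfl | hk
          · exact mem_S.2 (Or.inl one_def.symm)
          · exact absurd hx (hr k hk)
        · have hkj : r (j - k) ∈ H := by
            have := H.mul_mem hx hj
            rwa [sr_mul_sr] at this
          rcases eq_or_ne (j - k) 0 with he | he
          · have : k = j := by linear_combination -he
            exact mem_S.2 (Or.inr (by rw [this]))
          · exact absurd hkj (hr _ he)
      · intro x hx
        rcases mem_S.1 hx with rfl | rfl
        · exact H.one_mem
        · exact hj
    · left
      rw [eq_bot_iff]
      intro x hx
      rcases x with k | k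
      · rcases eq_or_ne k 0 with rfl | hk
        · exact Subgroup.mem_bot.2 one_def.symm
        · exact absurd hx (hr k hk)
      · exact absurd ⟨k, hx⟩ hs

section distinct
variable [Fact p.Prime]

lemma sr_not_mem_R (i : ZMod p) : sr i ∉ R p := by
  rintro ⟨j, h⟩; exact absurd h (by simp)

lemma R_ne_bot : R p ≠ ⊥ := by
  intro h
  have h1 : r (1 : ZMod p) ∈ R p := ⟨1, rfl⟩
  rw [h, Subgroup.mem_bot, one_def] at h1
  exact one_ne_zero (r.inj h1)

lemma R_ne_top : R p ≠ ⊤ := by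
  intro h
  exact sr_not_mem_R (0 : ZMod p) (h ▸ Subgroup.mem_top _)

lemma sr_ne_one (i : ZMod p) : sr i ≠ 1 := by rw [one_def]; exact fun h => by cases h

lemma S_ne_bot (i : ZMod p) : S i ≠ ⊥ := by
  intro h
  have h1 : sr i ∈ S i := mem_S.2 (Or.inr rfl)
  rw [h, Subgroup.mem_bot] at h1
  exact sr_ne_one i h1

lemma S_ne_top (i : ZMod p) : S i ≠ ⊤ := by
  intro h
  have h1 : r (1 : ZMod p) ∈ S i := h ▸ Subgroup.mem_top _
  rcases mem_S.1 h1 with h2 | h2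
  · rw [one_def] at h2; exact one_ne_zero (r.inj h2)
  · cases h2

lemma S_ne_R (i : ZMod p) : S i ≠ R p := by
  intro h
  exact sr_not_mem_R i (h ▸ mem_S.2 (Or.inr rfl))

lemma S_injective : Function.Injective (S (p := p)) := by
  intro i j h
  have h1 : sr i ∈ S j := h ▸ mem_S.2 (Or.inr rfl)
  rcases mem_S.1 h1 with h2 | h2
  · exact absurd h2 (sr_ne_one i)
  · exact sr.inj h2

lemma univ_subgroups : (Set.univ : Set (Subgroup (DihedralGroup p))) =
    insert ⊥ (insert ⊤ (insert (R p) (Set.range S))) := by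
  ext H
  simp only [Set.mem_univ, true_iff, Set.mem_insert_iff, Set.mem_range]
  rcases classify H with h | h | h | ⟨i, h⟩
  · exact Or.inl h
  · exact Or.inr (Or.inl h)
  · exact Or.inr (Or.inr (Or.inl h))
  · exact Or.inr (Or.inr (Or.inr ⟨i, h.symm⟩))

lemma card_subgroups : Nat.card (Subgroup (DihedralGroup p)) = p + 3 := by
  classical
  have hrange : (Set.range (S (p := p))).ncard = p := by
    rw [← Nat.card_coe_set_eq, Nat.card_range_of_injective S_injective, Nat.card_zmod]
  have h1 : R p ∉ Set.range (S (p := p)) := by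
    rintro ⟨i, hi⟩; exact S_ne_R i hi
  have h2 : (⊤ : Subgroup (DihedralGroup p)) ∉ insert (R p) (Set.range S) := by
    simp only [Set.mem_insert_iff, Set.mem_range]
    push_neg
    exact ⟨R_ne_top.symm, fun i h => S_ne_top i h⟩
  have h3 : (⊥ : Subgroup (DihedralGroup p)) ∉
      insert ⊤ (insert (R p) (Set.range S)) := by
    simp only [Set.mem_insert_iff, Set.mem_range]
    push_neg
    exact ⟨bot_ne_top, R_ne_bot.symm, fun i h => S_ne_bot i h⟩
  rw [← Set.ncard_univ, univ_subgroups, Set.ncard_insert_of_notMem h3,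
    Set.ncard_insert_of_notMem h2, Set.ncard_insert_of_notMem h1, hrange]

/-- The set of permuting pairs. -/
def T (p : ℕ) : Set (Subgroup (DihedralGroup p) × Subgroup (DihedralGroup p)) :=
  {HK | (HK.1 : Set (DihedralGroup p)) * (HK.2 : Set (DihedralGroup p)) =
    (HK.2 : Set (DihedralGroup p)) * (HK.1 : Set (DihedralGroup p))}

lemma normal_comm {G : Type*} [Group G] (H K : Subgroup G) (hH : H.Normal) :
    (H : Set G) * (K : Set G) = (K : Set G) * (H : Set G) := by
  haveI := hH
  rw [← Subgroup.normal_mul H K, ← Subgroup.mul_normal K H, sup_comm]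

lemma two_ne_zero' (hodd : Odd p) : (2 : ZMod p) ≠ 0 := by
  have hp := (Fact.out : p.Prime)
  intro h
  have hd : (p : ℕ) ∣ 2 :=
    (ZMod.natCast_eq_zero_iff 2 p).1 (by exact_mod_cast h)
  have := (Nat.prime_dvd_prime_iff_eq hp Nat.prime_two).1 hd
  subst this
  exact (by decide : ¬ Odd 2) hodd

lemma S_not_comm (hodd : Odd p) {i j : ZMod p} (hij : i ≠ j) :
    (S i : Set (DihedralGroup p)) * (S j : Set (DihedralGroup p)) ≠
      (S j : Set (DihedralGroup p)) * (S i : Set (DihedralGroup p)) := by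
  intro h
  have hmem : sr i * sr j ∈ (S i : Set (DihedralGroup p)) * (S j : Set (DihedralGroup p)) :=
    Set.mul_mem_mul (mem_S.2 (Or.inr rfl)) (mem_S.2 (Or.inr rfl))
  rw [h] at hmem
  obtain ⟨a, ha, b, hb, hab⟩ := hmem
  dsimp only at hab
  rw [sr_mul_sr] at hab
  rcases (mem_S.1 ha) with rfl | rfl <;> rcases (mem_S.1 hb) with rfl | rfl
  · rw [one_mul, one_def] at hab
    exact hij (by linear_combination (r.inj hab))
  · rw [one_mul] at hab; cases hab
  · rw [mul_one] at hab; cases hab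
  · rw [sr_mul_sr] at hab
    have h2 : (2 : ZMod p) * i = 2 * j := by linear_combination (r.inj hab)
    exact hij (mul_left_cancel₀ (two_ne_zero' hodd) h2)

lemma compl_T (hodd : Odd p) : (T p)ᶜ =
    (fun ij : ZMod p × ZMod p => (S ij.1, S ij.2)) '' {ij | ij.1 ≠ ij.2} := by
  ext ⟨H, K⟩
  simp only [Set.mem_compl_iff, T, Set.mem_setOf_eq, Set.mem_image, Prod.mk.injEq, Prod.exists]
  constructor
  · intro h
    rcases classify H with rfl | rfl | rfl | ⟨i, rfl⟩
    · exact absurd (normal_comm _ _ inferInstance) h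
    · exact absurd (normal_comm _ _ inferInstance) h
    · exact absurd (normal_comm _ _ R_normal) h
    · rcases classify K with rfl | rfl | rfl | ⟨j, rfl⟩
      · exact absurd ((normal_comm _ _ inferInstance).symm) h
      · exact absurd ((normal_comm _ _ inferInstance).symm) h
      · exact absurd ((normal_comm _ _ R_normal).symm) h
      · rcases eq_or_ne i j with rfl | hij
        · exact absurd rfl h
        · exact ⟨i, j, hij, rfl, rfl⟩
  · rintro ⟨i, j, hij, rfl, rfl⟩
    exact S_not_comm hodd hij

lemma card_T (hodd : Odd p) : (T p).ncard = 7 * p + 9 := by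
  classical
  have key : (T p).ncard + ((T p)ᶜ).ncard =
      Nat.card (Subgroup (DihedralGroup p) × Subgroup (DihedralGroup p)) :=
    Set.ncard_add_ncard_compl _
  have hprod : Nat.card (Subgroup (DihedralGroup p) × Subgroup (DihedralGroup p)) =
      (p + 3) * (p + 3) := by
    rw [Nat.card_prod, card_subgroups]
  have hinj : Set.InjOn (fun ij : ZMod p × ZMod p => (S ij.1, S ij.2))
      {ij | ij.1 ≠ ij.2} := by
    rintro ⟨a, b⟩ _ ⟨c, d⟩ _ h
    simp only [Prod.mk.injEq] at h
    exact Prod.ext (S_injective h.1) (S_injective h.2)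
  have hdiag : ({ij : ZMod p × ZMod p | ij.1 = ij.2}).ncard = p := by
    have he : {ij : ZMod p × ZMod p | ij.1 = ij.2} = Set.range (fun a => (a, a)) := by
      ext ⟨a, b⟩
      simp only [Set.mem_setOf_eq, Set.mem_range, Prod.mk.injEq]
      constructor
      · rintro rfl; exact ⟨a, rfl, rfl⟩
      · rintro ⟨c, rfl, rfl⟩; rfl
    rw [he, ← Nat.card_coe_set_eq,
      Nat.card_range_of_injective (fun a b h => (Prod.mk.injEq _ _ _ _ ▸ h : _ ∧ _).1),
      Nat.card_zmod]
  have hcompl2 : ({ij : ZMod p × ZMod p | ij.1 = ij.2}).ncard +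
      ({ij : ZMod p × ZMod p | ij.1 = ij.2}ᶜ).ncard = Nat.card (ZMod p × ZMod p) :=
    Set.ncard_add_ncard_compl _
  have hzc : Nat.card (ZMod p × ZMod p) = p * p := by
    rw [Nat.card_prod, Nat.card_zmod]
  have hne : ({ij : ZMod p × ZMod p | ij.1 = ij.2}ᶜ) = {ij : ZMod p × ZMod p | ij.1 ≠ ij.2} := by
    ext ij; simp [Set.mem_compl_iff]
  have hT : ((T p)ᶜ).ncard = ({ij : ZMod p × ZMod p | ij.1 ≠ ij.2}).ncard := by
    rw [compl_T hodd, Set.ncard_image_of_injOn hinj]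
  rw [hne, hzc] at hcompl2
  rw [hprod, hT] at key
  have hsq : (p + 3) * (p + 3) = p * p + 6 * p + 9 := by ring
  rw [hsq] at key
  set q := p * p
  omega

end distinct
end SDAux

theorem sd_dihedral_odd_prime (p : ℕ) (hp : p.Prime) (hodd : Odd p) :
    sd (DihedralGroup p) =
      (7 * (p : ℚ) ^ 3 - 5 * p ^ 2 - 11 * p + 9) /
        ((p : ℚ) ^ 4 + 4 * p ^ 3 - 2 * p ^ 2 - 12 * p + 9) := by
  haveI : Fact p.Prime := ⟨hp⟩
  haveI : NeZero p := ⟨hp.pos.ne'⟩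
  have hcard : Nat.card {HK : Subgroup (DihedralGroup p) × Subgroup (DihedralGroup p) //
      (HK.1 : Set (DihedralGroup p)) * (HK.2 : Set (DihedralGroup p)) =
        (HK.2 : Set (DihedralGroup p)) * (HK.1 : Set (DihedralGroup p))} = 7 * p + 9 := by
    have h1 : Nat.card (SDAux.T p) = (SDAux.T p).ncard := Nat.card_coe_set_eq _
    rw [SDAux.card_T hodd] at h1
    exact h1
  have hp3 : 3 ≤ p := by
    have h2 := hp.two_le
    rcases hodd with ⟨k, rfl⟩
    omega
  unfold sd
  rw [hcard, SDAux.card_subgroups]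
  have hq3 : (3 : ℚ) ≤ (p : ℚ) := by exact_mod_cast hp3
  have hd1 : ((↑(p + 3) : ℚ)) ^ 2 ≠ 0 := by
    push_cast; positivity
  have hd2 : (p : ℚ) ^ 4 + 4 * p ^ 3 - 2 * p ^ 2 - 12 * p + 9 ≠ 0 := by
    have he : (p : ℚ) ^ 4 + 4 * p ^ 3 - 2 * p ^ 2 - 12 * p + 9 =
        (((p : ℚ) + 3) * ((p : ℚ) - 1)) ^ 2 := by ring
    rw [he]
    apply pow_ne_zero
    apply mul_ne_zero <;> nlinarith
  rw [div_eq_div_iff hd1 hd2]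
  push_cast
  ring
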